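/- Any 3N points in the plane can be partitioned into N triples such that the convex hulls (triangles or segments or points) of the triples have a common point. -/

import Mathlib

open Finset Real

namespace BirchAux



/-- dot product of two planar vectors represented as complex numbers -/
def dd (w z : ℂ) : ℝ := w.re * z.re + w.im * z.im

/-- the vector from `p` to `x`, as a complex number -/
def cz (p x : Fin 2 → ℝ) : ℂ := ⟨x 0 - p 0, x 1 - p 1⟩

lemma cz_eq_zero_iff {p x : Fin 2 → ℝ} : cz p x = 0 ↔ x = p := by
  constructor
  · intro h
    have h1 : (cz p x).re = 0 := by rw [h]; simp
    have h2 : (cz p x).im = 0 := by rw [h]; simp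
    simp only [cz] at h1 h2
    funext i
    fin_cases i <;> [skip; skip] <;> simp <;> linarith
  · intro h; subst h; simp [cz, Complex.ext_iff]

lemma dd_zero_right (w : ℂ) : dd w 0 = 0 := by simp [dd]

lemma dd_neg_left (w z : ℂ) : dd (-w) z = -(dd w z) := by simp [dd]; ring

lemma dd_eq_cos {w z : ℂ} (hw : w ≠ 0) (hz : z ≠ 0) :
    dd w z = ‖w‖ * ‖z‖ * Real.cos (z.arg - w.arg) := by
  rw [Real.cos_sub, Complex.cos_arg hz, Complex.cos_arg hw,
    Complex.sin_arg z, Complex.sin_arg w]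
  have h1 : (‖w‖) ≠ 0 := norm_ne_zero_iff.mpr hw
  have h2 : (‖z‖) ≠ 0 := norm_ne_zero_iff.mpr hz
  field_simp [dd]
  unfold dd
  ring

lemma dd_le_iff_cos {w z : ℂ} (hw : w ≠ 0) (hz : z ≠ 0) :
    dd w z ≤ 0 ↔ Real.cos (z.arg - w.arg) ≤ 0 := by
  rw [dd_eq_cos hw hz]
  have hpos : 0 < ‖w‖ * ‖z‖ :=
    mul_pos (norm_pos_iff.mpr hw) (norm_pos_iff.mpr hz)
  constructor
  · intro h; nlinarith
  · intro h; nlinarith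

lemma dd_pos_iff_cos {w z : ℂ} (hw : w ≠ 0) (hz : z ≠ 0) :
    0 < dd w z ↔ Real.cos (z.arg - (-w).arg) < 0 := by
  have hw' : (-w) ≠ 0 := neg_ne_zero.mpr hw
  rw [show dd w z = -(dd (-w) z) by rw [dd_neg_left]; ring,
    dd_eq_cos hw' hz]
  have hpos : 0 < ‖-w‖ * ‖z‖ :=
    mul_pos (norm_pos_iff.mpr hw') (norm_pos_iff.mpr hz)
  constructor
  · intro h; nlinarith
  · intro h; nlinarith

/-- characterization of `cos x ≤ 0` on `(-2π, 2π)` -/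
lemma cos_nonpos_char {x : ℝ} (h1 : -(2*π) < x) (h2 : x < 2*π) :
    Real.cos x ≤ 0 ↔ (π/2 ≤ x ∧ x ≤ π + π/2) ∨ (x ≤ -(π/2) ∧ -(π + π/2) ≤ x) := by
  have hπ := Real.pi_pos
  constructor
  · intro h
    by_contra hc
    push_neg at hc
    obtain ⟨hc1, hc2⟩ := hc
    -- show 0 < cos x in each remaining region
    have : 0 < Real.cos x := by
      rcases lt_or_ge x (π/2) with hx1 | hx1
      · rcases lt_or_ge (-(π/2)) x with hx2 | hx2
        · exact Real.cos_pos_of_mem_Ioo ⟨hx2, hx1⟩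
        · have hlt : x < -(π + π/2) := hc2 hx2
          have : Real.cos (x + 2*π) = Real.cos x := by
            rw [show x + 2*π = x + 2*π by ring, Real.cos_add_two_pi]
          rw [← this]
          exact Real.cos_pos_of_mem_Ioo (Set.mem_Ioo.mpr ⟨by linarith, by linarith⟩)
      · have hgt : π + π/2 < x := hc1 hx1
        have : Real.cos (x - 2*π) = Real.cos x := Real.cos_sub_two_pi x
        rw [← this]
        exact Real.cos_pos_of_mem_Ioo (Set.mem_Ioo.mpr ⟨by linarith, by linarith⟩)
    linarith
  · rintro (⟨ha, hb⟩ | ⟨ha, hb⟩)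
    · exact Real.cos_nonpos_of_pi_div_two_le_of_le ha hb
    · rw [← Real.cos_neg]
      exact Real.cos_nonpos_of_pi_div_two_le_of_le (by linarith) (by linarith)

/-- characterization of `cos x < 0` on `(-2π, 2π)` -/
lemma cos_neg_char {x : ℝ} (h1 : -(2*π) < x) (h2 : x < 2*π) :
    Real.cos x < 0 ↔ (π/2 < x ∧ x < π + π/2) ∨ (x < -(π/2) ∧ -(π + π/2) < x) := by
  have hπ := Real.pi_pos
  constructor
  · intro h
    by_contra hc
    push_neg at hc
    obtain ⟨hc1, hc2⟩ := hc
    have : 0 ≤ Real.cos x := by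
      rcases le_or_gt x (π/2) with hx1 | hx1
      · rcases le_or_gt (-(π/2)) x with hx2 | hx2
        · exact Real.cos_nonneg_of_mem_Icc ⟨hx2, hx1⟩
        · have hle : x ≤ -(π + π/2) := hc2 hx2
          have : Real.cos (x + 2*π) = Real.cos x := Real.cos_add_two_pi x
          rw [← this]
          exact Real.cos_nonneg_of_mem_Icc (Set.mem_Icc.mpr ⟨by linarith, by linarith⟩)
      · have hge : π + π/2 ≤ x := hc1 hx1
        have : Real.cos (x - 2*π) = Real.cos x := Real.cos_sub_two_pi x
        rw [← this]
        exact Real.cos_nonneg_of_mem_Icc (Set.mem_Icc.mpr ⟨by linarith, by linarith⟩)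
    linarith
  · rintro (⟨ha, hb⟩ | ⟨ha, hb⟩)
    · exact Real.cos_neg_of_pi_div_two_lt_of_lt ha hb
    · rw [← Real.cos_neg]
      exact Real.cos_neg_of_pi_div_two_lt_of_lt (by linarith) (by linarith)



theorem connect_gen {n : ℕ} {θ : Fin n → ℝ} (mono : Monotone θ)
    (hr : ∀ l, θ l ∈ Set.Ioc (-π) π) {β : ℝ} (hβ : β ∈ Set.Ioc (-π) π)
    (strict : Bool)
    (C : ℝ → Prop)
    (char : ∀ x, -(2*π) < x → x < 2*π →
      (C x ↔ (if strict then (π/2 < x ∧ x < π + π/2) ∨ (x < -(π/2) ∧ -(π + π/2) < x)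
        else (π/2 ≤ x ∧ x ≤ π + π/2) ∨ (x ≤ -(π/2) ∧ -(π + π/2) ≤ x))))
    {i j : Fin n} (hij : i ≤ j) (hi : C (θ i - β)) (hj : C (θ j - β)) :
    (∀ l, i ≤ l → l ≤ j → C (θ l - β)) ∨
      ((∀ l, l ≤ i → C (θ l - β)) ∧ (∀ l, j ≤ l → C (θ l - β))) := by
  have hπ := Real.pi_pos
  have hb1 := hβ.1; have hb2 := hβ.2
  have hrange : ∀ l : Fin n, -(2*π) < θ l - β ∧ θ l - β < 2*π := fun l =>
    ⟨by have h := (hr l).1; linarith, by have h := (hr l).2; linarith⟩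
  have char' : ∀ l : Fin n, C (θ l - β) ↔ _ := fun l => char _ (hrange l).1 (hrange l).2
  rw [char' i] at hi; rw [char' j] at hj
  have hmij : θ i ≤ θ j := mono hij
  cases strict with
  | true =>
    simp only [if_true] at hi hj char'
    rcases hi with ⟨hi1, hi2⟩ | ⟨hi1, hi2⟩
    · rcases hj with ⟨hj1, hj2⟩ | ⟨hj1, hj2⟩
      · left; intro l h1 h2; rw [char' l]
        exact Or.inl ⟨by have := mono h1; linarith, by have := mono h2; linarith⟩
      · exfalso; linarith
    · rcases hj with ⟨hj1, hj2⟩ | ⟨hj1, hj2⟩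
      · -- i lower, j upper
        right
        have hβle : β < π/2 := by have h := (hr j).2; linarith
        have hβge : -(π/2) < β := by have h := (hr i).1; linarith
        constructor
        · intro l hl; rw [char' l]
          exact Or.inr ⟨by have := mono hl; linarith, by have := (hr l).1; linarith⟩
        · intro l hl; rw [char' l]
          exact Or.inl ⟨by have := mono hl; linarith, by have := (hr l).2; linarith⟩
      · left; intro l h1 h2; rw [char' l]
        exact Or.inr ⟨by have := mono h2; linarith, by have := mono h1; linarith⟩
  | false =>
    simp only [Bool.false_eq_true, if_false] at hi hj char'
    rcases hi with ⟨hi1, hi2⟩ | ⟨hi1, hi2⟩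
    · rcases hj with ⟨hj1, hj2⟩ | ⟨hj1, hj2⟩
      · left; intro l h1 h2; rw [char' l]
        exact Or.inl ⟨by have := mono h1; linarith, by have := mono h2; linarith⟩
      · exfalso; linarith
    · rcases hj with ⟨hj1, hj2⟩ | ⟨hj1, hj2⟩
      · right
        have hβle : β ≤ π/2 := by have h := (hr j).2; linarith
        have hβge : -(π/2) ≤ β := by have h := (hr i).1; linarith
        constructor
        · intro l hl; rw [char' l]
          exact Or.inr ⟨by have := mono hl; linarith, by have := (hr l).1; linarith⟩
        · intro l hl; rw [char' l]
          exact Or.inl ⟨by have := mono hl; linarith, by have := (hr l).2; linarith⟩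
      · left; intro l h1 h2; rw [char' l]
        exact Or.inr ⟨by have := mono h2; linarith, by have := mono h1; linarith⟩

/-- counting points in an index interval -/
lemma card_of_icc {nn : ℕ} (P : Fin nn → Prop) [DecidablePred P] {i j : Fin nn}
    (hij : i ≤ j) (h : ∀ l, i ≤ l → l ≤ j → P l) :
    (j : ℕ) - (i : ℕ) + 1 ≤ (univ.filter P).card := by
  have hsub : Finset.Icc i j ⊆ univ.filter P := by
    intro l hl
    rw [Finset.mem_Icc] at hl
    exact Finset.mem_filter.mpr ⟨Finset.mem_univ _, h l hl.1 hl.2⟩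
  calc (j : ℕ) - (i : ℕ) + 1 = (Finset.Icc i j).card := by
        rw [Fin.card_Icc]; have := Fin.le_def.mp hij; omega
    _ ≤ _ := Finset.card_le_card hsub

lemma card_of_out {nn : ℕ} (P : Fin nn → Prop) [DecidablePred P] {i j : Fin nn}
    (hij : (i : ℕ) < j) (h1 : ∀ l, l ≤ i → P l) (h2 : ∀ l, j ≤ l → P l) :
    ((i : ℕ) + 1) + (nn - (j : ℕ)) ≤ (univ.filter P).card := by
  have hsub : Finset.Iic i ∪ Finset.Ici j ⊆ univ.filter P := by
    intro l hl
    rcases Finset.mem_union.mp hl with hl | hl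
    · exact Finset.mem_filter.mpr ⟨Finset.mem_univ _, h1 l (Finset.mem_Iic.mp hl)⟩
    · exact Finset.mem_filter.mpr ⟨Finset.mem_univ _, h2 l (Finset.mem_Ici.mp hl)⟩
  have hd : Disjoint (Finset.Iic i) (Finset.Ici j) := by
    rw [Finset.disjoint_left]
    intro l hl hl'
    have := Fin.le_def.mp (Finset.mem_Iic.mp hl)
    have := Fin.le_def.mp (Finset.mem_Ici.mp hl')
    omega
  calc ((i : ℕ) + 1) + (nn - (j : ℕ))
      = (Finset.Iic i ∪ Finset.Ici j).card := by
        rw [Finset.card_union_of_disjoint hd, Fin.card_Iic, Fin.card_Ici]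
    _ ≤ _ := Finset.card_le_card hsub

/-- two marked points give at least k+1 -/
lemma card_pair {nn k : ℕ} (P : Fin nn → Prop) [DecidablePred P]
    (conn : ∀ i j : Fin nn, i ≤ j → P i → P j →
      (∀ l, i ≤ l → l ≤ j → P l) ∨ ((∀ l, l ≤ i → P l) ∧ (∀ l, j ≤ l → P l)))
    {i j : Fin nn} (hij : (i:ℕ) < j) (hi : P i) (hj : P j)
    (g1 : k ≤ (j:ℕ) - i) (g2 : k ≤ (i:ℕ) + (nn - j)) : k + 1 ≤ (univ.filter P).card := by
  have hij' : i ≤ j := Fin.le_def.mpr hij.le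
  rcases conn i j hij' hi hj with h | ⟨ha, hb⟩
  · have := card_of_icc P hij' h; omega
  · have := card_of_out P hij ha hb; omega

/-- three marked points at positions 0, k, 2k give at least 2k+1 -/
lemma card_triple {nn k : ℕ} (hnn : nn = 3*k) (hk : 1 ≤ k) (P : Fin nn → Prop) [DecidablePred P]
    (conn : ∀ i j : Fin nn, i ≤ j → P i → P j →
      (∀ l, i ≤ l → l ≤ j → P l) ∨ ((∀ l, l ≤ i → P l) ∧ (∀ l, j ≤ l → P l)))
    {i0 i1 i2 : Fin nn} (h0 : (i0:ℕ) = 0) (h1 : (i1:ℕ) = k) (h2 : (i2:ℕ) = 2*k)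
    (p0 : P i0) (p1 : P i1) (p2 : P i2) : 2*k + 1 ≤ (univ.filter P).card := by
  have h01 : i0 ≤ i1 := Fin.le_def.mpr (by omega)
  have h12 : i1 ≤ i2 := Fin.le_def.mpr (by omega)
  rcases conn i0 i1 h01 p0 p1 with hA | ⟨hB1, hB2⟩
  · rcases conn i1 i2 h12 p1 p2 with hA' | ⟨hB1', hB2'⟩
    · have hcc : ∀ l, i0 ≤ l → l ≤ i2 → P l := by
        intro l hl1 hl2
        rcases le_total l i1 with hl | hl
        · exact hA l hl1 hl
        · exact hA' l hl hl2
      have := card_of_icc P (le_trans h01 h12) hcc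
      omega
    · have hij : (i1:ℕ) < i2 := by omega
      have := card_of_out P hij hB1' hB2'
      omega
  · have hij : (i0:ℕ) < i1 := by omega
    have := card_of_out P hij hB1 hB2
    omega




lemma dd_decomp (w : ℂ) {ws : ℂ} (hws : ws ≠ 0) :
    ∃ α γ : ℝ, ∀ z : ℂ, dd w z = α * dd ws z + γ * dd (ws * Complex.I) z := by
  have hn : 0 < ws.re * ws.re + ws.im * ws.im := by
    have := Complex.normSq_pos.mpr hws
    rwa [Complex.normSq_apply] at this
  refine ⟨(w.re * ws.re + w.im * ws.im) / (ws.re * ws.re + ws.im * ws.im),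
    (w.im * ws.re - w.re * ws.im) / (ws.re * ws.re + ws.im * ws.im), fun z => ?_⟩
  simp only [dd, Complex.mul_re, Complex.mul_im, Complex.I_re, Complex.I_im]
  have hn2 : ws.re ^ 2 + ws.im ^ 2 ≠ 0 := by rw [sq, sq]; exact hn.ne'
  field_simp
  ring

lemma prefix_or_suffix {n r : ℕ} (f : Fin n → (Fin 2 → ℝ)) (p : Fin 2 → ℝ)
    {ws : ℂ} (hws : ws ≠ 0) (u : Fin r → Fin n)
    (hpos : ∀ l, 0 < dd ws (cz p (f (u l))))
    (monoρ : Monotone (fun l => dd (ws * Complex.I) (cz p (f (u l))) / dd ws (cz p (f (u l)))))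
    (w : ℂ) :
    (∀ l l' : Fin r, l' ≤ l → dd w (cz p (f (u l))) ≤ 0 → dd w (cz p (f (u l'))) ≤ 0) ∨
    (∀ l l' : Fin r, l ≤ l' → dd w (cz p (f (u l))) ≤ 0 → dd w (cz p (f (u l'))) ≤ 0) := by
  obtain ⟨α, γ, hd⟩ := dd_decomp w hws
  set ρ : Fin r → ℝ := fun l => dd (ws * Complex.I) (cz p (f (u l))) / dd ws (cz p (f (u l)))
    with hρdef
  have key : ∀ l, (dd w (cz p (f (u l))) ≤ 0 ↔ α + γ * ρ l ≤ 0) := by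
    intro l
    have h := hpos l
    have hcancel : ρ l * dd ws (cz p (f (u l))) = dd (ws * Complex.I) (cz p (f (u l))) := by
      rw [hρdef]; field_simp
    have heq : (α + γ * ρ l) * dd ws (cz p (f (u l))) =
        α * dd ws (cz p (f (u l))) + γ * dd (ws * Complex.I) (cz p (f (u l))) := by
      rw [add_mul, mul_assoc, hcancel]
    rw [hd]
    constructor
    · intro hle
      by_contra hgt
      push_neg at hgt
      nlinarith [mul_pos hgt h]
    · intro hle
      nlinarith [mul_nonneg (neg_nonneg.mpr hle) h.le]
  rcases le_or_gt γ 0 with hγ | hγ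
  · right; intro l l' hle hc
    rw [key] at hc ⊢
    have hm := monoρ hle
    nlinarith
  · left; intro l l' hle hc
    rw [key] at hc ⊢
    have hm := monoρ hle
    nlinarith

lemma card_of_downset {r : ℕ} (P : Fin r → Prop) [DecidablePred P]
    (hdown : ∀ l l' : Fin r, l' ≤ l → P l → P l') {q : Fin r} (hq : P q) :
    (q : ℕ) + 1 ≤ (univ.filter P).card := by
  have hsub : Finset.Iic q ⊆ univ.filter P := fun l hl =>
    Finset.mem_filter.mpr ⟨Finset.mem_univ _, hdown q l (Finset.mem_Iic.mp hl) hq⟩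
  calc (q:ℕ) + 1 = (Finset.Iic q).card := (Fin.card_Iic q).symm
    _ ≤ _ := Finset.card_le_card hsub

lemma card_of_upset {r : ℕ} (P : Fin r → Prop) [DecidablePred P]
    (hup : ∀ l l' : Fin r, l ≤ l' → P l → P l') {q : Fin r} (hq : P q) :
    r - (q : ℕ) ≤ (univ.filter P).card := by
  have hsub : Finset.Ici q ⊆ univ.filter P := fun l hl =>
    Finset.mem_filter.mpr ⟨Finset.mem_univ _, hup q l (Finset.mem_Ici.mp hl) hq⟩
  calc r - (q:ℕ) = (Finset.Ici q).card := (Fin.card_Ici q).symm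
    _ ≤ _ := Finset.card_le_card hsub

lemma separation {n : ℕ} (f : Fin n → (Fin 2 → ℝ)) (p : Fin 2 → ℝ) (T : Finset (Fin n))
    (h : p ∉ convexHull ℝ (f '' ↑T)) :
    ∃ w : ℂ, ∀ i ∈ T, 0 < dd w (cz p (f i)) := by
  have hconv : Convex ℝ (convexHull ℝ (f '' ↑T)) := convex_convexHull ℝ _
  have hclosed : IsClosed (convexHull ℝ (f '' ↑T)) :=
    (T.finite_toSet.image f).isClosed_convexHull ℝ
  obtain ⟨L, u, hLp, hLx⟩ := geometric_hahn_banach_point_closed hconv hclosed h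
  set E0 : Fin 2 → ℝ := fun j => if j = 0 then 1 else 0 with hE0
  set E1 : Fin 2 → ℝ := fun j => if j = 1 then 1 else 0 with hE1
  have key : ∀ x : Fin 2 → ℝ, L x = x 0 * L E0 + x 1 * L E1 := by
    intro x
    have hx : x = x 0 • E0 + x 1 • E1 := by
      funext j
      fin_cases j <;> simp [hE0, hE1]
    calc L x = L (x 0 • E0 + x 1 • E1) := by rw [← hx]
      _ = x 0 * L E0 + x 1 * L E1 := by
          rw [map_add, map_smul, map_smul]; simp
  refine ⟨⟨L E0, L E1⟩, fun i hi => ?_⟩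
  have hx : u < L (f i) :=
    hLx _ (subset_convexHull ℝ _ (Set.mem_image_of_mem f (by exact_mod_cast hi)))
  have : dd ⟨L E0, L E1⟩ (cz p (f i)) = L (f i) - L p := by
    simp only [dd, cz, key (f i), key p]
    ring
  rw [this]
  linarith

lemma dd_nonneg_of_pos {w : ℂ} {z : ℂ} (h : 0 < dd w z) : w ≠ 0 := by
  intro h0
  rw [h0] at h
  simp [dd] at h

lemma rest_filter {n : ℕ} (s T : Finset (Fin n)) (C : Fin n → Prop) [DecidablePred C] :
    ((s \ T).filter C) = (s.filter C) \ T := by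
  ext i
  simp only [Finset.mem_filter, Finset.mem_sdiff]
  tauto

lemma card_restdepth {α : Type*} [DecidableEq α] {A T : Finset α} {b c : ℕ}
    (hA : b + c ≤ A.card) (hT : (A ∩ T).card ≤ c) : b ≤ (A \ T).card := by
  have := Finset.card_sdiff_add_card_inter A T
  omega

set_option maxHeartbeats 2000000 in
theorem extract {k n : ℕ} (hk : 1 ≤ k) (f : Fin n → (Fin 2 → ℝ)) (p : Fin 2 → ℝ)
    (s : Finset (Fin n)) (hcard : s.card = 3 * k)
    (depth : ∀ w : ℂ, w ≠ 0 → k ≤ (s.filter fun i => dd w (cz p (f i)) ≤ 0).card) :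
    ∃ T, T ⊆ s ∧ T.card = 3 ∧ p ∈ convexHull ℝ (f '' ↑T) ∧
      ∀ w : ℂ, w ≠ 0 → k - 1 ≤ ((s \ T).filter fun i => dd w (cz p (f i)) ≤ 0).card := by
  set zs := s.filter (fun i => f i = p) with hzs
  set nz := s.filter (fun i => ¬ f i = p) with hnz
  set m := zs.card with hm
  have hsplitcard : m + nz.card = 3 * k := by
    rw [hm, hzs, hnz, ← hcard]
    exact Finset.card_filter_add_card_filter_not _
  have hzsD : ∀ w : ℂ, zs ⊆ s.filter (fun i => dd w (cz p (f i)) ≤ 0) := by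
    intro w i hi
    rw [hzs, Finset.mem_filter] at hi
    rw [Finset.mem_filter]
    refine ⟨hi.1, ?_⟩
    have : cz p (f i) = 0 := cz_eq_zero_iff.mpr hi.2
    rw [this, dd_zero_right]
  have hsD : ∀ w : ℂ, (s.filter fun i => dd w (cz p (f i)) ≤ 0).card
      = m + (nz.filter fun i => dd w (cz p (f i)) ≤ 0).card := by
    intro w
    have : s.filter (fun i => dd w (cz p (f i)) ≤ 0)
        = zs ∪ (nz.filter fun i => dd w (cz p (f i)) ≤ 0) := by
      ext i
      simp only [Finset.mem_union, Finset.mem_filter, hzs, hnz]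
      constructor
      · rintro ⟨his, hd⟩
        by_cases hz : f i = p
        · exact Or.inl ⟨his, hz⟩
        · exact Or.inr ⟨⟨his, hz⟩, hd⟩
      · rintro (⟨his, hz⟩ | ⟨⟨his, hz⟩, hd⟩)
        · refine ⟨his, ?_⟩
          have : cz p (f i) = 0 := cz_eq_zero_iff.mpr hz
          rw [this, dd_zero_right]
        · exact ⟨his, hd⟩
    rw [this, Finset.card_union_of_disjoint]
    rw [Finset.disjoint_left]
    intro i hi hi'
    rw [hzs, Finset.mem_filter] at hi
    rw [Finset.mem_filter, hnz, Finset.mem_filter] at hi'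
    exact hi'.1.2 hi.2
  by_cases hm0 : m = 0
  · -- CASE D : no point equals p
    have hnzcz : ∀ i ∈ s, cz p (f i) ≠ 0 := by
      intro i hi h0
      have hfi : f i = p := cz_eq_zero_iff.mp h0
      have : i ∈ zs := by rw [hzs, Finset.mem_filter]; exact ⟨hi, hfi⟩
      have := Finset.card_pos.mpr ⟨i, this⟩
      omega
    have hcard' : s.card = 3 * k := hcard
    set e0 := s.orderIsoOfFin hcard' with he0
    set θraw : Fin (3*k) → ℝ := fun l => (cz p (f (e0 l))).arg with hθraw
    set σ := Tuple.sort θraw with hσ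
    set e : Fin (3*k) → Fin n := fun l => (e0 (σ l) : Fin n) with he
    have hmono : Monotone (θraw ∘ σ) := Tuple.monotone_sort θraw
    have hrange : ∀ l, (θraw ∘ σ) l ∈ Set.Ioc (-π) π := fun l => Complex.arg_mem_Ioc _
    have hes : ∀ l, e l ∈ s := fun l => (e0 (σ l)).2
    have heinj : Function.Injective e := by
      intro a b hab
      apply σ.injective
      apply e0.injective
      exact Subtype.ext hab
    have hesurj : ∀ i ∈ s, ∃ l, e l = i := by
      intro i hi
      exact ⟨σ.symm (e0.symm ⟨i, hi⟩), by simp [he]⟩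
    have hbridge : ∀ (C : Fin n → Prop) (inst : DecidablePred C),
        (s.filter C).card = (univ.filter fun l => C (e l)).card := by
      intro C inst
      refine (Finset.card_bij (fun l _ => e l) ?_ ?_ ?_).symm
      · intro l hl
        rw [Finset.mem_filter] at hl ⊢
        exact ⟨hes l, hl.2⟩
      · intro a _ b _ hab; exact heinj hab
      · intro i hi
        rw [Finset.mem_filter] at hi
        obtain ⟨l, hl⟩ := hesurj i hi.1
        exact ⟨l, Finset.mem_filter.mpr ⟨Finset.mem_univ _, hl ▸ hi.2⟩, hl⟩
    set i0 : Fin (3*k) := ⟨0, by omega⟩ with hi0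
    set i1 : Fin (3*k) := ⟨k, by omega⟩ with hi1
    set i2 : Fin (3*k) := ⟨2*k, by omega⟩ with hi2
    have hv0 : (i0 : ℕ) = 0 := rfl
    have hv1 : (i1 : ℕ) = k := rfl
    have hv2 : (i2 : ℕ) = 2*k := rfl
    have hne01 : e i0 ≠ e i1 := by
      intro h; have := heinj h; rw [Fin.ext_iff, hv0, hv1] at this; omega
    have hne02 : e i0 ≠ e i2 := by
      intro h; have := heinj h; rw [Fin.ext_iff, hv0, hv2] at this; omega
    have hne12 : e i1 ≠ e i2 := by
      intro h; have := heinj h; rw [Fin.ext_iff, hv1, hv2] at this; omega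
    have hTcard : ({e i0, e i1, e i2} : Finset (Fin n)).card = 3 := by
      rw [Finset.card_insert_of_notMem, Finset.card_insert_of_notMem, Finset.card_singleton]
      · simp only [Finset.mem_singleton]; exact hne12
      · simp only [Finset.mem_insert, Finset.mem_singleton]; push_neg; exact ⟨hne01, hne02⟩
    refine ⟨{e i0, e i1, e i2}, ?_, hTcard, ?_, ?_⟩
    · intro i hi
      simp only [Finset.mem_insert, Finset.mem_singleton] at hi
      rcases hi with rfl | rfl | rfl <;> exact hes _
    · -- p in the hull of the triple
      by_contra hp
      obtain ⟨w, hw⟩ := separation f p _ hp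
      have hw0 : w ≠ 0 := dd_nonneg_of_pos (hw (e i0) (by simp))
      have hnw0 : (-w) ≠ 0 := neg_ne_zero.mpr hw0
      set β := (-w).arg with hβdef
      have hβ : β ∈ Set.Ioc (-π) π := Complex.arg_mem_Ioc _
      set P : Fin (3*k) → Prop := fun l => Real.cos ((θraw ∘ σ) l - β) < 0 with hPdef
      have hP : ∀ l : Fin (3*k), P l ↔ 0 < dd w (cz p (f (e l))) := fun l =>
        (dd_pos_iff_cos hw0 (hnzcz _ (hes l))).symm
      have conn : ∀ a b : Fin (3*k), a ≤ b → P a → P b →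
          (∀ l, a ≤ l → l ≤ b → P l) ∨ ((∀ l, l ≤ a → P l) ∧ (∀ l, b ≤ l → P l)) := by
        intro a b hab ha hb
        exact connect_gen hmono hrange hβ true (fun x => Real.cos x < 0)
          (by intro x h1 h2; simpa using cos_neg_char h1 h2) hab ha hb
      have htrip := card_triple rfl hk P conn hv0 hv1 hv2
        ((hP i0).mpr (hw _ (by simp))) ((hP i1).mpr (hw _ (by simp)))
        ((hP i2).mpr (hw _ (by simp)))
      have hcnt : (s.filter fun i => ¬ dd w (cz p (f i)) ≤ 0).card = (univ.filter P).card := by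
        rw [hbridge (fun i => ¬ dd w (cz p (f i)) ≤ 0) _]
        congr 1
        apply Finset.filter_congr
        intro l _
        rw [not_le]
        exact (hP l).symm
      have hsum := Finset.card_filter_add_card_filter_not
        (s := s) (fun i => dd w (cz p (f i)) ≤ 0)
      have hdep := depth w hw0
      have htrip' : 2*k+1 ≤ (s.filter fun i => ¬ dd w (cz p (f i)) ≤ 0).card := by
        rw [hcnt]; exact htrip
      omega
    · -- rest depth
      intro w hw
      set A := s.filter (fun i => dd w (cz p (f i)) ≤ 0) with hA
      have hdep : k ≤ A.card := by rw [hA]; exact depth w hw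
      set Q : Fin (3*k) → Prop := fun l => Real.cos ((θraw ∘ σ) l - w.arg) ≤ 0 with hQdef
      have hβ : w.arg ∈ Set.Ioc (-π) π := Complex.arg_mem_Ioc _
      have hQ : ∀ l : Fin (3*k), Q l ↔ dd w (cz p (f (e l))) ≤ 0 := fun l =>
        (dd_le_iff_cos hw (hnzcz _ (hes l))).symm
      have connQ : ∀ a b : Fin (3*k), a ≤ b → Q a → Q b →
          (∀ l, a ≤ l → l ≤ b → Q l) ∨ ((∀ l, l ≤ a → Q l) ∧ (∀ l, b ≤ l → Q l)) := by
        intro a b hab ha hb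
        exact connect_gen hmono hrange hβ false (fun x => Real.cos x ≤ 0)
          (by intro x h1 h2; simpa using cos_nonpos_char h1 h2) hab ha hb
      have hQA : (univ.filter Q).card = A.card := by
        rw [hA, hbridge (fun i => dd w (cz p (f i)) ≤ 0) _]
        congr 1
        apply Finset.filter_congr
        intro l _
        exact hQ l
      rw [rest_filter, ← hA]
      by_cases hd0 : dd w (cz p (f (e i0))) ≤ 0 <;>
        by_cases hd1 : dd w (cz p (f (e i1))) ≤ 0 <;>
        by_cases hd2 : dd w (cz p (f (e i2))) ≤ 0
      -- all 8 cases
      · -- all three in A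
        have h3 := card_triple rfl hk Q connQ hv0 hv1 hv2
          ((hQ i0).mpr hd0) ((hQ i1).mpr hd1) ((hQ i2).mpr hd2)
        have h3' : 2*k+1 ≤ A.card := le_trans h3 (le_of_eq hQA)
        refine card_restdepth (c := 3) (by omega) ?_
        calc (A ∩ {e i0, e i1, e i2}).card ≤ ({e i0, e i1, e i2} : Finset (Fin n)).card :=
              Finset.card_le_card Finset.inter_subset_right
          _ = 3 := hTcard
      · -- i0 i1 in
        have h2 := card_pair (k := k) Q connQ (show (i0:ℕ) < i1 by omega)
          ((hQ i0).mpr hd0) ((hQ i1).mpr hd1) (by omega) (by omega)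
        have h2' : k+1 ≤ A.card := le_trans h2 (le_of_eq hQA)
        refine card_restdepth (c := 2) (by omega) ?_
        have hsub2 : A ∩ {e i0, e i1, e i2} ⊆ {e i0, e i1} := by
          intro x hx
          obtain ⟨hxA, hxT⟩ := Finset.mem_inter.mp hx
          have hxD := (Finset.mem_filter.mp hxA).2
          simp only [Finset.mem_insert, Finset.mem_singleton] at hxT ⊢
          rcases hxT with rfl | rfl | rfl
          · exact Or.inl rfl
          · exact Or.inr rfl
          · exact absurd hxD hd2
        refine le_trans (Finset.card_le_card hsub2) ?_
        exact le_trans (Finset.card_insert_le _ _) (by simp)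
      · -- i0 i2 in
        have h2 := card_pair (k := k) Q connQ (show (i0:ℕ) < i2 by omega)
          ((hQ i0).mpr hd0) ((hQ i2).mpr hd2) (by omega) (by omega)
        have h2' : k+1 ≤ A.card := le_trans h2 (le_of_eq hQA)
        refine card_restdepth (c := 2) (by omega) ?_
        have hsub2 : A ∩ {e i0, e i1, e i2} ⊆ {e i0, e i2} := by
          intro x hx
          obtain ⟨hxA, hxT⟩ := Finset.mem_inter.mp hx
          have hxD := (Finset.mem_filter.mp hxA).2
          simp only [Finset.mem_insert, Finset.mem_singleton] at hxT ⊢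
          rcases hxT with rfl | rfl | rfl
          · exact Or.inl rfl
          · exact absurd hxD hd1
          · exact Or.inr rfl
        refine le_trans (Finset.card_le_card hsub2) ?_
        exact le_trans (Finset.card_insert_le _ _) (by simp)
      · -- only i0
        refine card_restdepth (c := 1) (by omega) ?_
        have : A ∩ {e i0, e i1, e i2} ⊆ {e i0} := by
          intro x hx
          obtain ⟨hxA, hxT⟩ := Finset.mem_inter.mp hx
          have hxD := (Finset.mem_filter.mp hxA).2
          simp only [Finset.mem_insert, Finset.mem_singleton] at hxT ⊢
          rcases hxT with rfl | rfl | rfl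
          · rfl
          · exact absurd hxD hd1
          · exact absurd hxD hd2
        exact le_trans (Finset.card_le_card this) (by simp)
      · -- i1 i2 in
        have h2 := card_pair (k := k) Q connQ (show (i1:ℕ) < i2 by omega)
          ((hQ i1).mpr hd1) ((hQ i2).mpr hd2) (by omega) (by omega)
        have h2' : k+1 ≤ A.card := le_trans h2 (le_of_eq hQA)
        refine card_restdepth (c := 2) (by omega) ?_
        have hsub2 : A ∩ {e i0, e i1, e i2} ⊆ {e i1, e i2} := by
          intro x hx
          obtain ⟨hxA, hxT⟩ := Finset.mem_inter.mp hx
          have hxD := (Finset.mem_filter.mp hxA).2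
          simp only [Finset.mem_insert, Finset.mem_singleton] at hxT ⊢
          rcases hxT with rfl | rfl | rfl
          · exact absurd hxD hd0
          · exact Or.inl rfl
          · exact Or.inr rfl
        refine le_trans (Finset.card_le_card hsub2) ?_
        exact le_trans (Finset.card_insert_le _ _) (by simp)
      · -- only i1
        refine card_restdepth (c := 1) (by omega) ?_
        have : A ∩ {e i0, e i1, e i2} ⊆ {e i1} := by
          intro x hx
          obtain ⟨hxA, hxT⟩ := Finset.mem_inter.mp hx
          have hxD := (Finset.mem_filter.mp hxA).2
          simp only [Finset.mem_insert, Finset.mem_singleton] at hxT ⊢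
          rcases hxT with rfl | rfl | rfl
          · exact absurd hxD hd0
          · rfl
          · exact absurd hxD hd2
        exact le_trans (Finset.card_le_card this) (by simp)
      · -- only i2
        refine card_restdepth (c := 1) (by omega) ?_
        have : A ∩ {e i0, e i1, e i2} ⊆ {e i2} := by
          intro x hx
          obtain ⟨hxA, hxT⟩ := Finset.mem_inter.mp hx
          have hxD := (Finset.mem_filter.mp hxA).2
          simp only [Finset.mem_insert, Finset.mem_singleton] at hxT ⊢
          rcases hxT with rfl | rfl | rfl
          · exact absurd hxD hd0
          · exact absurd hxD hd1
          · rfl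
        exact le_trans (Finset.card_le_card this) (by simp)
      · -- none
        refine card_restdepth (c := 1) (by omega) ?_
        have : A ∩ {e i0, e i1, e i2} ⊆ ∅ := by
          intro x hx
          obtain ⟨hxA, hxT⟩ := Finset.mem_inter.mp hx
          have hxD := (Finset.mem_filter.mp hxA).2
          simp only [Finset.mem_insert, Finset.mem_singleton] at hxT
          rcases hxT with rfl | rfl | rfl
          · exact absurd hxD hd0
          · exact absurd hxD hd1
          · exact absurd hxD hd2
        exact le_trans (Finset.card_le_card this) (by simp)
  · -- some point equals p
    obtain ⟨z, hz⟩ : ∃ z, z ∈ zs := Finset.card_pos.mp (by omega) |>.imp (fun z h => h)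
    have hzs' : z ∈ s ∧ f z = p := by
      rw [hzs, Finset.mem_filter] at hz; exact hz
    rcases eq_or_lt_of_le hk with hk1 | hk2
    · -- k = 1 : take z plus any two other elements
      obtain ⟨T', hT's, hT'c⟩ := Finset.exists_subset_card_eq
        (show 2 ≤ (s.erase z).card by rw [Finset.card_erase_of_mem hzs'.1]; omega)
      refine ⟨insert z T', ?_, ?_, ?_, ?_⟩
      · intro i hi
        rcases Finset.mem_insert.mp hi with rfl | hi
        · exact hzs'.1
        · exact Finset.erase_subset _ _ (hT's hi)
      · rw [Finset.card_insert_of_notMem (fun hmem => (Finset.mem_erase.mp (hT's hmem)).1 rfl),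
          hT'c]
      · exact subset_convexHull ℝ _ ⟨z, by simp, hzs'.2⟩
      · intro w hw
        have : k - 1 = 0 := by omega
        rw [this]
        exact Nat.zero_le _
    · by_cases hmk : k ≤ m
      · -- many zeros: free triple
        by_cases hnz2 : 2 ≤ nz.card
        · obtain ⟨a, ha, b, hb, hab⟩ := Finset.one_lt_card.mp hnz2
          have hanz : a ∈ s ∧ ¬ f a = p := by rw [hnz, Finset.mem_filter] at ha; exact ha
          have hbnz : b ∈ s ∧ ¬ f b = p := by rw [hnz, Finset.mem_filter] at hb; exact hb
          refine ⟨{z, a, b}, ?_, ?_, ?_, ?_⟩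
          · intro i hi
            simp only [Finset.mem_insert, Finset.mem_singleton] at hi
            rcases hi with rfl | rfl | rfl
            exacts [hzs'.1, hanz.1, hbnz.1]
          · rw [Finset.card_insert_of_notMem, Finset.card_insert_of_notMem, Finset.card_singleton]
            · simp only [Finset.mem_singleton]; exact hab
            · simp only [Finset.mem_insert, Finset.mem_singleton]
              push_neg
              exact ⟨fun h => hanz.2 (h ▸ hzs'.2), fun h => hbnz.2 (h ▸ hzs'.2)⟩
          · exact subset_convexHull ℝ _ ⟨z, by simp, hzs'.2⟩
          · intro w hw
            have hsub : zs.erase z ⊆ (s \ {z, a, b}).filter (fun i => dd w (cz p (f i)) ≤ 0) := by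
              intro i hi
              obtain ⟨hiz, hizs⟩ := Finset.mem_erase.mp hi
              have hizs' := Finset.mem_filter.mp hizs
              rw [Finset.mem_filter, Finset.mem_sdiff]
              refine ⟨⟨hizs'.1, ?_⟩, ?_⟩
              · simp only [Finset.mem_insert, Finset.mem_singleton]
                push_neg
                refine ⟨hiz, fun h => hanz.2 (h ▸ hizs'.2), fun h => hbnz.2 (h ▸ hizs'.2)⟩
              · have : cz p (f i) = 0 := cz_eq_zero_iff.mpr hizs'.2
                rw [this, dd_zero_right]
            calc k - 1 ≤ m - 1 := by omega
              _ = (zs.erase z).card := by rw [Finset.card_erase_of_mem hz, hm]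
              _ ≤ _ := Finset.card_le_card hsub
        · -- almost all zeros
          have hm3 : 3 * k - 1 ≤ m := by omega
          obtain ⟨T', hT's, hT'c⟩ := Finset.exists_subset_card_eq
            (show 2 ≤ (s.erase z).card by rw [Finset.card_erase_of_mem hzs'.1]; omega)
          refine ⟨insert z T', ?_, ?_, ?_, ?_⟩
          · intro i hi
            rcases Finset.mem_insert.mp hi with rfl | hi
            · exact hzs'.1
            · exact Finset.erase_subset _ _ (hT's hi)
          · rw [Finset.card_insert_of_notMem (fun hmem => (Finset.mem_erase.mp (hT's hmem)).1 rfl),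
              hT'c]
          · exact subset_convexHull ℝ _ ⟨z, by simp, hzs'.2⟩
          · intro w hw
            have hsub : zs \ insert z T' ⊆ (s \ insert z T').filter
                (fun i => dd w (cz p (f i)) ≤ 0) := by
              intro i hi
              obtain ⟨hizs, hiT⟩ := Finset.mem_sdiff.mp hi
              have hizs' := Finset.mem_filter.mp hizs
              rw [Finset.mem_filter, Finset.mem_sdiff]
              refine ⟨⟨hizs'.1, hiT⟩, ?_⟩
              have : cz p (f i) = 0 := cz_eq_zero_iff.mpr hizs'.2
              rw [this, dd_zero_right]
            have hTcard : (insert z T').card = 3 := by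
              rw [Finset.card_insert_of_notMem (fun hmem => (Finset.mem_erase.mp (hT's hmem)).1 rfl),
                hT'c]
            have h1 : m - 3 ≤ (zs \ insert z T').card := by
              have := Finset.card_sdiff_add_card_inter zs (insert z T')
              have h2 : (zs ∩ insert z T').card ≤ 3 := le_trans
                (Finset.card_le_card (Finset.inter_subset_right)) (le_of_eq hTcard)
              omega
            calc k - 1 ≤ m - 3 := by omega
              _ ≤ _ := h1
              _ ≤ _ := Finset.card_le_card hsub
      · -- CASE C : 1 ≤ m < k
        have hm1 : 1 ≤ m := by omega
        have hmk' : m < k := by omega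
        have hnzcard : nz.card = 3*k - m := by omega
        have hnzdepth : ∀ w : ℂ, w ≠ 0 →
            k - m ≤ (nz.filter fun i => dd w (cz p (f i)) ≤ 0).card := by
          intro w hw
          have h1 := depth w hw
          have h2 := hsD w
          omega
        have hcne : Set.Nonempty {c : ℕ | ∃ w : ℂ, w ≠ 0 ∧
            (nz.filter fun i => dd w (cz p (f i)) ≤ 0).card = c} := ⟨_, 1, one_ne_zero, rfl⟩
        set cstar := sInf {c : ℕ | ∃ w : ℂ, w ≠ 0 ∧
            (nz.filter fun i => dd w (cz p (f i)) ≤ 0).card = c} with hcstar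
        have hcmem := Nat.sInf_mem hcne
        rw [← hcstar] at hcmem
        obtain ⟨ws, hws0, hwscard⟩ := hcmem
        have hcmin : ∀ w : ℂ, w ≠ 0 →
            cstar ≤ (nz.filter fun i => dd w (cz p (f i)) ≤ 0).card :=
          fun w hw => Nat.sInf_le ⟨w, hw, rfl⟩
        have hcK : k - m ≤ cstar := hwscard ▸ hnzdepth ws hws0
        by_cases hbig : k - m + 2 ≤ cstar
        · -- every halfplane is heavy : any two nonzero points work
          obtain ⟨a, ha, b, hb, hab⟩ := Finset.one_lt_card.mp (show 1 < nz.card by omega)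
          have hanz : a ∈ s ∧ ¬ f a = p := by rw [hnz, Finset.mem_filter] at ha; exact ha
          have hbnz : b ∈ s ∧ ¬ f b = p := by rw [hnz, Finset.mem_filter] at hb; exact hb
          have hTcard : ({z, a, b} : Finset (Fin n)).card = 3 := by
            rw [Finset.card_insert_of_notMem, Finset.card_insert_of_notMem,
              Finset.card_singleton]
            · simp only [Finset.mem_singleton]; exact hab
            · simp only [Finset.mem_insert, Finset.mem_singleton]
              push_neg
              exact ⟨fun h => hanz.2 (h ▸ hzs'.2), fun h => hbnz.2 (h ▸ hzs'.2)⟩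
          refine ⟨{z, a, b}, ?_, hTcard, ?_, ?_⟩
          · intro i hi
            simp only [Finset.mem_insert, Finset.mem_singleton] at hi
            rcases hi with rfl | rfl | rfl
            exacts [hzs'.1, hanz.1, hbnz.1]
          · exact subset_convexHull ℝ _ ⟨z, by simp, hzs'.2⟩
          · intro w hw
            rw [rest_filter]
            have h1 := hcmin w hw
            have h2 := hsD w
            refine card_restdepth (c := 3) (by omega) ?_
            calc (_ ∩ ({z, a, b} : Finset (Fin n))).card
                ≤ ({z, a, b} : Finset (Fin n)).card :=
                  Finset.card_le_card Finset.inter_subset_right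
              _ = 3 := hTcard
        · -- cstar is k - m or k - m + 1
          set V := nz.filter (fun i => ¬ dd ws (cz p (f i)) ≤ 0) with hV
          have hVD : V = nz \ (nz.filter fun i => dd ws (cz p (f i)) ≤ 0) := by
            rw [hV]
            ext i
            simp only [Finset.mem_filter, Finset.mem_sdiff]
            tauto
          have hVcard0 : V.card + cstar = nz.card := by
            rw [hVD, ← hwscard, Finset.card_sdiff_of_subset (Finset.filter_subset _ _)]
            have := Finset.card_le_card
              (Finset.filter_subset (fun i => dd ws (cz p (f i)) ≤ 0) nz)
            omega
          set r := V.card with hr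
          have hrval : r = 3*k - m - cstar := by omega
          set e1 := V.orderIsoOfFin hr.symm with he1
          set ρraw : Fin r → ℝ :=
            fun l => dd (ws * Complex.I) (cz p (f (e1 l))) / dd ws (cz p (f (e1 l))) with hρraw
          set σ1 := Tuple.sort ρraw with hσ1
          set u : Fin r → Fin n := fun l => (e1 (σ1 l) : Fin n) with hu
          have huV : ∀ l, u l ∈ V := fun l => (e1 (σ1 l)).2
          have hunz : ∀ l, u l ∈ nz := fun l => by
            have := huV l
            rw [hV, Finset.mem_filter] at this
            exact this.1
          have hupos : ∀ l, 0 < dd ws (cz p (f (u l))) := by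
            intro l
            have hl := huV l
            rw [hV, Finset.mem_filter] at hl
            exact not_le.mp hl.2
          have huinj : Function.Injective u :=
            fun a b hab => σ1.injective (e1.injective (Subtype.ext hab))
          have humono : Monotone (ρraw ∘ σ1) := Tuple.monotone_sort ρraw
          have husurjV : ∀ i ∈ V, ∃ l, u l = i := by
            intro i hi
            exact ⟨σ1.symm (e1.symm ⟨i, hi⟩), by simp [hu]⟩
          have hVbridge : ∀ (C : Fin n → Prop) (inst : DecidablePred C),
              (univ.filter fun l => C (u l)).card = (V.filter C).card := by
            intro C inst
            refine Finset.card_bij (fun l _ => u l) ?_ ?_ ?_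
            · intro l hl
              rw [Finset.mem_filter] at hl ⊢
              exact ⟨huV l, hl.2⟩
            · intro a _ b _ hab; exact huinj hab
            · intro i hi
              rw [Finset.mem_filter] at hi
              obtain ⟨l, hl⟩ := husurjV i hi.1
              exact ⟨l, Finset.mem_filter.mpr ⟨Finset.mem_univ _, hl ▸ hi.2⟩, hl⟩
          have hVle : ∀ (w : ℂ), (V.filter (fun i => dd w (cz p (f i)) ≤ 0)).card
              ≤ (nz.filter (fun i => dd w (cz p (f i)) ≤ 0)).card := by
            intro w
            apply Finset.card_le_card
            apply Finset.filter_subset_filter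
            rw [hV]
            exact Finset.filter_subset _ _
          have hposbound : ∀ (w : ℂ) (q : Fin r), dd w (cz p (f (u q))) ≤ 0 →
              min ((q:ℕ)+1) (r - (q:ℕ)) ≤ (nz.filter fun i => dd w (cz p (f i)) ≤ 0).card := by
            intro w q hq
            rcases prefix_or_suffix f p hws0 u hupos (by exact humono) w with hpre | hsuf
            · refine le_trans (min_le_left _ _) (le_trans ?_ (hVle w))
              refine le_trans (card_of_downset (fun l => dd w (cz p (f (u l))) ≤ 0) hpre hq) ?_
              exact le_of_eq (hVbridge (fun i => dd w (cz p (f i)) ≤ 0) _)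
            · refine le_trans (min_le_right _ _) (le_trans ?_ (hVle w))
              refine le_trans (card_of_upset (fun l => dd w (cz p (f (u l))) ≤ 0) hsuf hq) ?_
              exact le_of_eq (hVbridge (fun i => dd w (cz p (f i)) ≤ 0) _)
          have hpairbound : ∀ (w : ℂ) (qa qb : Fin r), qa ≤ qb →
              dd w (cz p (f (u qa))) ≤ 0 → dd w (cz p (f (u qb))) ≤ 0 →
              min ((qb:ℕ)+1) (r - (qa:ℕ)) ≤ (nz.filter fun i => dd w (cz p (f i)) ≤ 0).card := by
            intro w qa qb hqab hqa hqb
            rcases prefix_or_suffix f p hws0 u hupos (by exact humono) w with hpre | hsuf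
            · refine le_trans (min_le_left _ _) (le_trans ?_ (hVle w))
              refine le_trans (card_of_downset (fun l => dd w (cz p (f (u l))) ≤ 0) hpre hqb) ?_
              exact le_of_eq (hVbridge (fun i => dd w (cz p (f i)) ≤ 0) _)
            · refine le_trans (min_le_right _ _) (le_trans ?_ (hVle w))
              refine le_trans (card_of_upset (fun l => dd w (cz p (f (u l))) ≤ 0) hsuf hqa) ?_
              exact le_of_eq (hVbridge (fun i => dd w (cz p (f i)) ≤ 0) _)
          obtain ⟨qa, qb, hqne, Fa, Fb, Fab⟩ :
              ∃ qa qb : Fin r, qa ≠ qb ∧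
                (∀ w : ℂ, w ≠ 0 → dd w (cz p (f (u qa))) ≤ 0 →
                  k - m + 1 ≤ (nz.filter fun i => dd w (cz p (f i)) ≤ 0).card) ∧
                (∀ w : ℂ, w ≠ 0 → dd w (cz p (f (u qb))) ≤ 0 →
                  k - m + 1 ≤ (nz.filter fun i => dd w (cz p (f i)) ≤ 0).card) ∧
                (∀ w : ℂ, w ≠ 0 → dd w (cz p (f (u qa))) ≤ 0 → dd w (cz p (f (u qb))) ≤ 0 →
                  k - m + 2 ≤ (nz.filter fun i => dd w (cz p (f i)) ≤ 0).card) := by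
            by_cases hsm : cstar = k - m
            · have hrv : r = 2*k := by omega
              refine ⟨⟨k - m, by omega⟩, ⟨k + m - 1, by omega⟩, ?_, ?_, ?_, ?_⟩
              · intro hqq
                rw [Fin.ext_iff] at hqq
                simp only [Fin.val_mk] at hqq
                omega
              · intro w hw hd
                have hb := hposbound w _ hd
                simp only [Fin.val_mk] at hb
                omega
              · intro w hw hd
                have hb := hposbound w _ hd
                simp only [Fin.val_mk] at hb
                omega
              · intro w hw hda hdb
                have hb := hpairbound w _ _ (by rw [Fin.le_def]; simp only [Fin.val_mk]; omega) hda hdb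
                simp only [Fin.val_mk] at hb
                omega
            · have hsm' : cstar = k - m + 1 := by omega
              have hrv : r = 2*k - 1 := by omega
              refine ⟨⟨0, by omega⟩, ⟨r - 1, by omega⟩, ?_, ?_, ?_, ?_⟩
              · intro hqq
                rw [Fin.ext_iff] at hqq
                simp only [Fin.val_mk] at hqq
                omega
              · intro w hw _
                have := hcmin w hw
                omega
              · intro w hw _
                have := hcmin w hw
                omega
              · intro w hw hda hdb
                have hb := hpairbound w _ _ (by rw [Fin.le_def]; simp only [Fin.val_mk]; omega) hda hdb
                simp only [Fin.val_mk] at hb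
                omega
          set a := u qa with hadef
          set b := u qb with hbdef
          have hab : a ≠ b := fun h => hqne (huinj h)
          have hanz : a ∈ s ∧ ¬ f a = p := by
            have := hunz qa; rw [hnz, Finset.mem_filter] at this; exact ⟨this.1, this.2⟩
          have hbnz : b ∈ s ∧ ¬ f b = p := by
            have := hunz qb; rw [hnz, Finset.mem_filter] at this; exact ⟨this.1, this.2⟩
          have hTcard : ({z, a, b} : Finset (Fin n)).card = 3 := by
            rw [Finset.card_insert_of_notMem, Finset.card_insert_of_notMem,
              Finset.card_singleton]
            · simp only [Finset.mem_singleton]; exact hab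
            · simp only [Finset.mem_insert, Finset.mem_singleton]
              push_neg
              exact ⟨fun h => hanz.2 (h ▸ hzs'.2), fun h => hbnz.2 (h ▸ hzs'.2)⟩
          refine ⟨{z, a, b}, ?_, hTcard, ?_, ?_⟩
          · intro i hi
            simp only [Finset.mem_insert, Finset.mem_singleton] at hi
            rcases hi with rfl | rfl | rfl
            exacts [hzs'.1, hanz.1, hbnz.1]
          · exact subset_convexHull ℝ _ ⟨z, by simp, hzs'.2⟩
          · intro w hw
            rw [rest_filter]
            have h2 := hsD w
            by_cases hda : dd w (cz p (f a)) ≤ 0 <;> by_cases hdb : dd w (cz p (f b)) ≤ 0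
            · -- both
              have h3 := Fab w hw hda hdb
              refine card_restdepth (c := 3) (by omega) ?_
              calc (_ ∩ ({z, a, b} : Finset (Fin n))).card
                  ≤ ({z, a, b} : Finset (Fin n)).card :=
                    Finset.card_le_card Finset.inter_subset_right
                _ = 3 := hTcard
            · -- only a
              have h3 := Fa w hw hda
              refine card_restdepth (c := 2) (by omega) ?_
              have hsub2 : (s.filter fun i => dd w (cz p (f i)) ≤ 0) ∩ {z, a, b}
                  ⊆ {z, a} := by
                intro x hx
                obtain ⟨hxA, hxT⟩ := Finset.mem_inter.mp hx
                have hxD := (Finset.mem_filter.mp hxA).2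
                simp only [Finset.mem_insert, Finset.mem_singleton] at hxT ⊢
                rcases hxT with rfl | rfl | rfl
                · exact Or.inl rfl
                · exact Or.inr rfl
                · exact absurd hxD hdb
              refine le_trans (Finset.card_le_card hsub2) ?_
              exact le_trans (Finset.card_insert_le _ _) (by simp)
            · -- only b
              have h3 := Fb w hw hdb
              refine card_restdepth (c := 2) (by omega) ?_
              have hsub2 : (s.filter fun i => dd w (cz p (f i)) ≤ 0) ∩ {z, a, b}
                  ⊆ {z, b} := by
                intro x hx
                obtain ⟨hxA, hxT⟩ := Finset.mem_inter.mp hx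
                have hxD := (Finset.mem_filter.mp hxA).2
                simp only [Finset.mem_insert, Finset.mem_singleton] at hxT ⊢
                rcases hxT with rfl | rfl | rfl
                · exact Or.inl rfl
                · exact absurd hxD hda
                · exact Or.inr rfl
              refine le_trans (Finset.card_le_card hsub2) ?_
              exact le_trans (Finset.card_insert_le _ _) (by simp)
            · -- neither
              have h3 := hnzdepth w hw
              refine card_restdepth (c := 1) (by omega) ?_
              have hsub1 : (s.filter fun i => dd w (cz p (f i)) ≤ 0) ∩ {z, a, b}
                  ⊆ {z} := by
                intro x hx
                obtain ⟨hxA, hxT⟩ := Finset.mem_inter.mp hx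
                have hxD := (Finset.mem_filter.mp hxA).2
                simp only [Finset.mem_insert, Finset.mem_singleton] at hxT ⊢
                rcases hxT with rfl | rfl | rfl
                · rfl
                · exact absurd hxD hda
                · exact absurd hxD hdb
              exact le_trans (Finset.card_le_card hsub1) (by simp)

theorem main {n : ℕ} (f : Fin n → (Fin 2 → ℝ)) (p : Fin 2 → ℝ) :
    ∀ (k : ℕ) (s : Finset (Fin n)), s.card = 3 * k →
    (∀ w : ℂ, w ≠ 0 → k ≤ (s.filter fun i => dd w (cz p (f i)) ≤ 0).card) →
    ∃ P : Fin k → Finset (Fin n),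
      (∀ j, P j ⊆ s) ∧ (∀ j, (P j).card = 3) ∧
      (∀ j j', j ≠ j' → Disjoint (P j) (P j')) ∧
      (∀ j, p ∈ convexHull ℝ (f '' ↑(P j))) := by
  intro k
  induction k with
  | zero =>
    intro s hs hdepth
    exact ⟨Fin.elim0, fun j => j.elim0, fun j => j.elim0, fun j => j.elim0, fun j => j.elim0⟩
  | succ k ih =>
    intro s hs hdepth
    obtain ⟨T, hTs, hTcard, hThull, hTdepth⟩ :=
      extract (Nat.succ_le_succ (Nat.zero_le k)) f p s hs hdepth
    have hrest : (s \ T).card = 3 * k := by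
      rw [Finset.card_sdiff_of_subset hTs, hTcard, hs]; omega
    have hrestdepth : ∀ w : ℂ, w ≠ 0 →
        k ≤ ((s \ T).filter fun i => dd w (cz p (f i)) ≤ 0).card := by
      intro w hw
      have := hTdepth w hw
      simpa using this
    obtain ⟨P', h1, h2, h3, h4⟩ := ih (s \ T) hrest hrestdepth
    refine ⟨Fin.cons T P', ?_, ?_, ?_, ?_⟩
    · intro j
      refine Fin.cases ?_ ?_ j
      · exact hTs
      · intro j'
        simp only [Fin.cons_succ]
        exact le_trans (h1 j') Finset.sdiff_subset
    · intro j
      refine Fin.cases ?_ ?_ j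
      · exact hTcard
      · intro j'; simp only [Fin.cons_succ]; exact h2 j'
    · intro j j' hne
      induction j using Fin.cases with
      | zero =>
        induction j' using Fin.cases with
        | zero => exact absurd rfl hne
        | succ j' =>
          simp only [Fin.cons_zero, Fin.cons_succ]
          exact Finset.disjoint_left.mpr
            (fun x hxT hxP => (Finset.mem_sdiff.mp (h1 j' hxP)).2 hxT)
      | succ j =>
        induction j' using Fin.cases with
        | zero =>
          simp only [Fin.cons_zero, Fin.cons_succ]
          exact Finset.disjoint_left.mpr
            (fun x hxP hxT => (Finset.mem_sdiff.mp (h1 j hxP)).2 hxT)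
        | succ j' =>
          simp only [Fin.cons_succ]
          exact h3 j j' (fun h => hne (congrArg Fin.succ h))
    · intro j
      refine Fin.cases ?_ ?_ j
      · exact hThull
      · intro j'; simp only [Fin.cons_succ]; exact h4 j'

end BirchAux

open BirchAux Finset in
/-- Birch's theorem: any 3N points in the plane (repetitions allowed) can be partitioned
into N triples whose convex hulls have a common point. -/
theorem birch (N : ℕ) (hN : 1 ≤ N) (f : Fin (3 * N) → (Fin 2 → ℝ)) :
    ∃ c : Fin (3 * N) → Fin N,
      (∀ j : Fin N, (Finset.univ.filter (fun i => c i = j)).card = 3) ∧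
      (⋂ j : Fin N, convexHull ℝ (f '' {i | c i = j})).Nonempty := by
  have hdim : Module.finrank ℝ (Fin 2 → ℝ) = 2 := by
    rw [Module.finrank_pi]; simp
  -- Helly's theorem gives a point in the hull of every (2N+1)-subset
  have hhelly : (⋂ S ∈ (Finset.univ : Finset (Fin (3*N))).powersetCard (2*N+1),
      convexHull ℝ (f '' ↑S)).Nonempty := by
    apply Convex.helly_theorem' (𝕜 := ℝ)
      (F := fun S : Finset (Fin (3*N)) => convexHull ℝ (f '' ↑S))
    · intro S _; exact convex_convexHull ℝ _
    · intro I hI hIcard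
      rw [hdim] at hIcard
      set B := I.biUnion (fun S => Finset.univ \ S) with hB
      have hBcard : B.card ≤ 3 * (N - 1) := by
        refine le_trans (Finset.card_biUnion_le) ?_
        have hone : ∀ S ∈ I, (Finset.univ \ S).card = N - 1 := by
          intro S hS
          have hS' := hI hS
          rw [Finset.mem_powersetCard] at hS'
          rw [Finset.card_sdiff_of_subset (fun x _ => Finset.mem_univ x)]
          rw [hS'.2]
          simp
          omega
        rw [Finset.sum_congr rfl hone, Finset.sum_const, smul_eq_mul]
        have : I.card ≤ 3 := hIcard
        exact Nat.mul_le_mul_right _ this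
      have hBne : ((Finset.univ : Finset (Fin (3*N))) \ B).Nonempty := by
        rw [← Finset.card_pos, Finset.card_sdiff_of_subset (Finset.subset_univ _)]
        have : (Finset.univ : Finset (Fin (3*N))).card = 3*N := by simp
        omega
      obtain ⟨i, hi⟩ := hBne
      rw [Finset.mem_sdiff] at hi
      refine ⟨f i, ?_⟩
      rw [Set.mem_iInter₂]
      intro S hS
      apply subset_convexHull
      refine ⟨i, ?_, rfl⟩
      simp only [Finset.mem_coe]
      by_contra hiS
      exact hi.2 (Finset.mem_biUnion.mpr ⟨S, hS, Finset.mem_sdiff.mpr ⟨Finset.mem_univ _, hiS⟩⟩)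
  obtain ⟨p, hp⟩ := hhelly
  rw [Set.mem_iInter₂] at hp
  -- depth property
  have hdepth : ∀ w : ℂ, w ≠ 0 →
      N ≤ (Finset.univ.filter fun i => dd w (cz p (f i)) ≤ 0).card := by
    intro w hw
    by_contra hlt
    push_neg at hlt
    have hc : 2*N+1 ≤ (Finset.univ.filter fun i => ¬ dd w (cz p (f i)) ≤ 0).card := by
      have hsum := Finset.card_filter_add_card_filter_not
        (s := (Finset.univ : Finset (Fin (3*N)))) (fun i => dd w (cz p (f i)) ≤ 0)
      have hcu : (Finset.univ : Finset (Fin (3*N))).card = 3*N := by simp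
      omega
    obtain ⟨S, hSsub, hScard⟩ := Finset.exists_subset_card_eq hc
    have hpS : p ∈ convexHull ℝ (f '' ↑S) := by
      apply hp
      rw [Finset.mem_powersetCard]
      exact ⟨Finset.subset_univ _, hScard⟩
    have hlin : IsLinearMap ℝ (fun y : Fin 2 → ℝ => w.re * y 0 + w.im * y 1) := by
      constructor
      · intro x y; simp [Pi.add_apply]; ring
      · intro c x; simp [Pi.smul_apply, smul_eq_mul]; ring
    have hhalf : convexHull ℝ (f '' ↑S) ⊆
        {x : Fin 2 → ℝ | w.re * p 0 + w.im * p 1 < w.re * x 0 + w.im * x 1} := by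
      apply convexHull_min
      · rintro x ⟨i, hiS, rfl⟩
        have hi : i ∈ S := by exact_mod_cast hiS
        have hi2 := hSsub hi
        rw [Finset.mem_filter] at hi2
        have := not_le.mp hi2.2
        simp only [Set.mem_setOf_eq]
        simp only [dd, cz] at this
        linarith
      · exact convex_halfSpace_gt hlin _
    have := hhalf hpS
    simp only [Set.mem_setOf_eq] at this
    linarith
  obtain ⟨P, hP1, hP2, hP3, hP4⟩ := main f p N Finset.univ (by simp) hdepth
  have hcover : ∀ i : Fin (3*N), ∃ j, i ∈ P j := by
    by_contra hcon
    push_neg at hcon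
    obtain ⟨i, hi⟩ := hcon
    have hdisj : (Finset.univ : Finset (Fin N)).biUnion P ⊆ Finset.univ.erase i := by
      intro x hx
      rw [Finset.mem_biUnion] at hx
      obtain ⟨j, _, hxj⟩ := hx
      rw [Finset.mem_erase]
      exact ⟨fun h => hi j (h ▸ hxj), Finset.mem_univ _⟩
    have hbc : ((Finset.univ : Finset (Fin N)).biUnion P).card = 3 * N := by
      rw [Finset.card_biUnion (fun x _ y _ hxy => hP3 x y hxy)]
      rw [Finset.sum_congr rfl (fun j _ => hP2 j), Finset.sum_const, smul_eq_mul]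
      simp [mul_comm]
    have hec : (Finset.univ.erase i).card = 3*N - 1 := by
      rw [Finset.card_erase_of_mem (Finset.mem_univ _)]
      simp
    have := Finset.card_le_card hdisj
    omega
  have hunique : ∀ (i : Fin (3*N)) (j j' : Fin N), i ∈ P j → i ∈ P j' → j = j' := by
    intro i j j' h1 h2
    by_contra hne
    exact Finset.disjoint_left.mp (hP3 j j' hne) h1 h2
  choose c hc using hcover
  refine ⟨c, ?_, ?_⟩
  · intro j
    have heq : Finset.univ.filter (fun i => c i = j) = P j := by
      ext i
      simp only [Finset.mem_filter, Finset.mem_univ, true_and]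
      constructor
      · rintro rfl; exact hc i
      · intro hi; exact hunique i (c i) j (hc i) hi
    rw [heq]; exact hP2 j
  · refine ⟨p, ?_⟩
    rw [Set.mem_iInter]
    intro j
    have heq : {i : Fin (3*N) | c i = j} = ↑(P j) := by
      ext i
      simp only [Set.mem_setOf_eq, Finset.mem_coe]
      constructor
      · rintro rfl; exact hc i
      · intro hi; exact hunique i (c i) j (hc i) hi
    rw [heq]
    exact hP4 j
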